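/- Let m ≥ 4 and d a positive integer. The binary linear code C_{D₂} = { (Tr(a x^d y + b x))_{(x,y) ∈ D₂} : a, b ∈ 𝔽_{2^m} }, with D₂ = { (x,y) ∈ 𝔽_{2^m}^* × 𝔽_{2^m}^* : Tr(x^{d+2} y + x^{d+1} y) = 0 }, is a [2^{2m−1} − 2^m + 1, 2m, 2^m(2^{m−2} − 1)] three-weight code with weight distribution: weight 2^m(2^{m−2} − 1) with frequency 2^{m−2}(2^{m−1} − 3) + 1; weight 2^{m−1}(2^{m−1} − 1) with frequency 3·2^{2m−2} − 2; weight 2^{2m−2} with frequency 2^{m−2}(2^{m−1} + 3). -/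
import Mathlib


open Finset
open scoped Classical

variable {F : Type*} [Field F] [Fintype F] [Algebra (ZMod 2) F]

noncomputable def Tr (z : F) : ZMod 2 := Algebra.trace (ZMod 2) F z

noncomputable def D2 (F : Type*) [Field F] [Fintype F] [Algebra (ZMod 2) F] (d : ℕ) :
    Finset (F × F) :=
  univ.filter fun q => q.1 ≠ 0 ∧ q.2 ≠ 0 ∧
    Tr (q.1 ^ (d + 2) * q.2 + q.1 ^ (d + 1) * q.2) = 0

noncomputable def wt2 (d : ℕ) (a b : F) : ℕ :=
  ((D2 F d).filter fun q => Tr (a * q.1 ^ d * q.2 + b * q.1) = 1).card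

lemma charF : CharP F 2 := charP_of_injective_algebraMap (algebraMap (ZMod 2) F).injective 2

lemma z2cases (x : ZMod 2) : x = 0 ∨ x = 1 := by revert x; decide

lemma addself (x : F) : x + x = 0 := by
  haveI := charF (F := F); exact CharTwo.add_self_eq_zero x

lemma Tr_add (x y : F) : Tr (x + y) = Tr x + Tr y := map_add (Algebra.trace (ZMod 2) F) x y

lemma Tr_zero : Tr (0 : F) = 0 := map_zero (Algebra.trace (ZMod 2) F)

lemma Tr_sq (x : F) : Tr (x ^ 2) = Tr x := by
  haveI := charF (F := F)
  haveI : Fact (Nat.Prime 2) := ⟨Nat.prime_two⟩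
  have hr : ∀ s : ZMod 2, s ^ 2 = s := by intro s; fin_cases s <;> rfl
  let e : F ≃ₐ[ZMod 2] F :=
    { frobeniusEquiv F 2 with
      commutes' := fun r => by
        show frobenius F 2 (algebraMap (ZMod 2) F r) = algebraMap (ZMod 2) F r
        rw [frobenius_def, ← map_pow, hr r] }
  have h := Algebra.trace_eq_of_algEquiv e x
  have hex : e x = x ^ 2 := by
    show frobeniusEquiv F 2 x = x ^ 2
    simp [frobeniusEquiv_apply, frobenius_def]
  rw [hex] at h
  exact h

lemma split2 {α : Type*} [Fintype α] (f : α → ZMod 2) :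
    (univ.filter fun y => f y = 0).card + (univ.filter fun y => f y = 1).card = Fintype.card α := by
  have h := Finset.card_filter_add_card_filter_not (s := univ) (p := fun y => f y = 0)
  rw [Finset.card_univ] at h
  rw [← h]
  congr 1
  congr 1
  ext y
  simp only [Finset.mem_filter, Finset.mem_univ, true_and]
  rcases z2cases (f y) with hy | hy <;> simp [hy]

lemma count_tr_aux (c : F) (hc : c ≠ 0) :
    (univ.filter fun y : F => Tr (c*y) = 0).card = (univ.filter fun y : F => Tr (c*y) = 1).card := by
  obtain ⟨z, hz⟩ := Algebra.trace_surjective (ZMod 2) F 1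
  have hz' : Tr (c * (c⁻¹ * z)) = 1 := by
    rw [← mul_assoc, mul_inv_cancel₀ hc, one_mul]; exact hz
  apply Finset.card_bij' (fun y _ => y + c⁻¹ * z) (fun y _ => y + c⁻¹ * z)
  · intro y hy
    simp only [Finset.mem_filter, Finset.mem_univ, true_and] at hy ⊢
    rw [mul_add, Tr_add, hy, hz', zero_add]
  · intro y hy
    simp only [Finset.mem_filter, Finset.mem_univ, true_and] at hy ⊢
    rw [mul_add, Tr_add, hy, hz']
    decide
  · intro y _; rw [add_assoc, addself, add_zero]
  · intro y _; rw [add_assoc, addself, add_zero]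

lemma count_tr (c : F) (hc : c ≠ 0) (t : ZMod 2) :
    (univ.filter fun y : F => Tr (c*y) = t).card * 2 = Fintype.card F := by
  have h := split2 (fun y : F => Tr (c*y))
  have h2 := count_tr_aux c hc
  rcases z2cases t with rfl | rfl <;> omega

lemma count_tr2 (u v : F) (hu : u ≠ 0) (hv : v ≠ 0) (huv : u ≠ v) (s t : ZMod 2) :
    (univ.filter fun y : F => Tr (u*y) = s ∧ Tr (v*y) = t).card * 4 = Fintype.card F := by
  have huv0 : u + v ≠ 0 := by
    intro h
    apply huv
    have := addself v
    have : u + v + v = v := by rw [h, zero_add]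
    rwa [add_assoc, addself, add_zero] at this
  set N : ZMod 2 → ZMod 2 → ℕ := fun s t =>
    (univ.filter fun y : F => Tr (u*y) = s ∧ Tr (v*y) = t).card with hN
  have row : ∀ s : ZMod 2, N s 0 + N s 1 = (univ.filter fun y : F => Tr (u*y) = s).card := by
    intro s
    simp only [hN, Finset.card_filter, ← Finset.sum_add_distrib]
    apply Finset.sum_congr rfl
    intro y _
    rcases z2cases (Tr (v*y)) with h | h <;> by_cases hy : Tr (u*y) = s <;> simp [h, hy]
  have col : ∀ t : ZMod 2, N 0 t + N 1 t = (univ.filter fun y : F => Tr (v*y) = t).card := by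
    intro t
    simp only [hN, Finset.card_filter, ← Finset.sum_add_distrib]
    apply Finset.sum_congr rfl
    intro y _
    rcases z2cases (Tr (u*y)) with h | h <;> by_cases hy : Tr (v*y) = t <;> simp [h, hy]
  have diag : N 0 0 + N 1 1 = (univ.filter fun y : F => Tr ((u+v)*y) = 0).card := by
    simp only [hN, Finset.card_filter, ← Finset.sum_add_distrib]
    apply Finset.sum_congr rfl
    intro y _
    rw [add_mul, Tr_add]
    rcases z2cases (Tr (u*y)) with h | h <;> rcases z2cases (Tr (v*y)) with h' | h' <;>
      simp [h, h'] <;> decide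
  have r0 := row 0; have r1 := row 1
  have c0 := col 0
  have d0 := diag
  have hu0 := count_tr u hu 0
  have hu1 := count_tr u hu 1
  have hv0 := count_tr v hv 0
  have hw0 := count_tr (u+v) huv0 0
  rw [← r0] at hu0; rw [← r1] at hu1; rw [← c0] at hv0; rw [← d0] at hw0
  have tot := split2 (fun y : F => Tr (u*y))
  rw [← r0, ← r1] at tot
  show N s t * 4 = Fintype.card F
  rcases z2cases s with rfl | rfl <;> rcases z2cases t with rfl | rfl <;>
    simp only [hN] at * <;> omega

lemma rootset (r : F) : (univ.filter fun x : F => x^2+x = r^2+r) = {r, r+1} := by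
  ext x
  simp only [Finset.mem_filter, Finset.mem_univ, true_and, Finset.mem_insert,
    Finset.mem_singleton]
  constructor
  · intro h
    have h2 : (x + r) * (x + r + 1) = 0 := by
      linear_combination h + (x*r + r^2 + r) * addself (1:F)
    rcases mul_eq_zero.mp h2 with h0 | h0
    · left; linear_combination h0 - r * addself (1:F)
    · right; linear_combination h0 - (r+1) * addself (1:F)
  · rintro (rfl | rfl)
    · rfl
    · linear_combination (r+1) * addself (1:F)

lemma root_ne_self (r : F) : r ≠ r + 1 := by
  intro h
  have : (0:F) = 1 := by linear_combination h
  exact zero_ne_one this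

lemma exists_root (a : F) (ha : Tr a = 0) : ∃ r : F, r^2 + r = a := by
  have hzz : ∀ s : ZMod 2, s + s = 0 := by decide
  set I := univ.image (fun x : F => x^2+x) with hI
  have hsub : I ⊆ univ.filter fun z : F => Tr z = 0 := by
    intro z hz
    obtain ⟨x, -, rfl⟩ := Finset.mem_image.mp hz
    simp only [Finset.mem_filter, Finset.mem_univ, true_and]
    rw [Tr_add, Tr_sq, hzz]
  have hfib : ∀ z ∈ I, (univ.filter fun x : F => x^2+x = z).card = 2 := by
    intro z hz
    obtain ⟨r, -, rfl⟩ := Finset.mem_image.mp hz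
    rw [rootset r, Finset.card_insert_of_notMem (by simp [root_ne_self r]),
      Finset.card_singleton]
  have hcard : I.card * 2 = Fintype.card F := by
    have h := Finset.card_eq_sum_card_fiberwise
      (f := fun x : F => x^2+x) (s := univ) (t := I)
      (fun x _ => Finset.mem_image_of_mem _ (Finset.mem_univ x))
    rw [Finset.card_univ] at h
    rw [Finset.sum_congr rfl hfib, Finset.sum_const, smul_eq_mul] at h
    omega
  have hK : (univ.filter fun z : F => Tr z = 0).card * 2 = Fintype.card F := by
    have := count_tr (1:F) one_ne_zero 0
    simpa using this
  have hIK : I = univ.filter fun z : F => Tr z = 0 := by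
    apply Finset.eq_of_subset_of_card_le hsub
    omega
  have : a ∈ I := by
    rw [hIK]; simp [ha]
  obtain ⟨r, -, hr⟩ := Finset.mem_image.mp this
  exact ⟨r, hr⟩

lemma drop_zero (P : F → Prop) :
    (univ.filter fun y : F => y ≠ 0 ∧ P y).card + (if P 0 then 1 else 0)
      = (univ.filter fun y : F => P y).card := by
  classical
  rw [Finset.card_filter, Finset.card_filter,
    ← Finset.add_sum_erase univ (fun y => if y ≠ 0 ∧ P y then 1 else 0) (Finset.mem_univ (0:F)),
    ← Finset.add_sum_erase univ (fun y => if P y then 1 else 0) (Finset.mem_univ (0:F))]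
  simp only [ne_eq, not_true_eq_false, false_and, if_false, zero_add]
  rw [add_comm]
  congr 1
  apply Finset.sum_congr rfl
  intro y hy
  have hy0 : ¬ y = 0 := Finset.ne_of_mem_erase hy
  simp [hy0]

lemma card_filter_ext {α : Type*} (s : Finset α) (p q : α → Prop) (ip : DecidablePred p)
    (iq : DecidablePred q) (h : ∀ x, p x ↔ q x) :
    (@Finset.filter α p ip s).card = (@Finset.filter α q iq s).card := by
  congr 1
  ext x
  simp only [Finset.mem_filter]
  exact and_congr_right fun _ => h x

lemma ite_ext {c₁ c₂ : Prop} (i₁ : Decidable c₁) (i₂ : Decidable c₂) (h : c₁ ↔ c₂) (a b : ℕ) :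
    (@ite ℕ c₁ i₁ a b) = (@ite ℕ c₂ i₂ a b) := if_congr h rfl rfl

noncomputable def inC (d : ℕ) (a b x : F) : ℕ :=
  (univ.filter fun y : F => (x ≠ 0 ∧ y ≠ 0 ∧ Tr (x^(d+2)*y + x^(d+1)*y) = 0)
    ∧ Tr (a*x^d*y + b*x) = 1).card

lemma card_prod_filter (P : F × F → Prop) :
    (univ.filter P).card = ∑ x : F, (univ.filter fun y : F => P (x, y)).card := by
  classical
  simp only [Finset.card_filter]
  rw [Fintype.sum_prod_type]

lemma wt2_eq_sum (d : ℕ) (a b : F) : wt2 d a b = ∑ x : F, inC d a b x := by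
  have h := card_prod_filter (P := fun q : F × F =>
    ((q.1 ≠ 0 ∧ q.2 ≠ 0 ∧ Tr (q.1^(d+2)*q.2 + q.1^(d+1)*q.2) = 0)
      ∧ Tr (a*q.1^d*q.2 + b*q.1) = 1))
  unfold wt2 D2 inC
  rw [Finset.filter_filter]
  refine (card_filter_ext _ _ _ _ _ (fun q => Iff.rfl)).trans (h.trans ?_)
  exact Finset.sum_congr rfl fun x _ => card_filter_ext _ _ _ _ _ (fun y => Iff.rfl)

lemma inC_x0 (d : ℕ) (a b : F) : inC d a b 0 = 0 := by
  unfold inC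
  rw [Finset.card_eq_zero]
  apply Finset.filter_false_of_mem
  rintro y - ⟨⟨h, -⟩, -⟩
  exact h rfl

lemma inC_shape (d : ℕ) (a b x : F) (hx : x ≠ 0) :
    inC d a b x + (if Tr (b*x) = 1 then 1 else 0)
      = (univ.filter fun y : F =>
          Tr ((x^d*(x^2+x))*y) = 0 ∧ Tr ((a*x^d)*y) = 1 + Tr (b*x)).card := by
  have hiff : ∀ s t : ZMod 2, (s + t = 1 ↔ s = 1 + t) := by decide
  have h1 : inC d a b x = (univ.filter fun y : F => y ≠ 0 ∧
      (Tr ((x^d*(x^2+x))*y) = 0 ∧ Tr ((a*x^d)*y) = 1 + Tr (b*x))).card := by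
    unfold inC
    congr 1
    ext y
    simp only [Finset.mem_filter, Finset.mem_univ, true_and]
    have e1 : x^(d+2)*y + x^(d+1)*y = (x^d*(x^2+x))*y := by ring
    have e2 : a*x^d*y + b*x = (a*x^d)*y + b*x := by ring
    rw [e1, e2, Tr_add]
    constructor
    · rintro ⟨⟨-, hy, h0⟩, hc⟩
      exact ⟨hy, h0, (hiff _ _).mp hc⟩
    · rintro ⟨hy, h0, hc⟩
      exact ⟨⟨hx, hy, h0⟩, (hiff _ _).mpr hc⟩
  rw [h1]
  refine Eq.trans (congrArg₂ HAdd.hAdd (card_filter_ext _ _ _ _ _ (fun y => Iff.rfl)) ?_)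
    ((drop_zero (P := fun y : F =>
      Tr ((x^d*(x^2+x))*y) = 0 ∧ Tr ((a*x^d)*y) = 1 + Tr (b*x))).trans
      (card_filter_ext _ _ _ _ _ (fun y => Iff.rfl)))
  refine ite_ext _ _ ?_ _ _
  simp only [mul_zero, Tr_zero]
  rcases z2cases (Tr (b*x)) with h | h <;> simp [h] <;> decide

lemma sq_add_ne (x : F) (hx : x ≠ 0) (hx1 : x ≠ 1) : x^2 + x ≠ 0 := by
  intro h
  have h2 : x * (x + 1) = 0 := by linear_combination h
  rcases mul_eq_zero.mp h2 with h0 | h0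
  · exact hx h0
  · exact hx1 (by linear_combination h0 - addself (1:F))

lemma inC_main (d : ℕ) (a b x : F) (hx : x ≠ 0) (hx1 : x ≠ 1) (ha : a ≠ 0)
    (hax : x^2 + x ≠ a) :
    (inC d a b x + (if Tr (b*x) = 1 then 1 else 0)) * 4 = Fintype.card F := by
  rw [inC_shape d a b x hx]
  have hu : x^d*(x^2+x) ≠ 0 := mul_ne_zero (pow_ne_zero d hx) (sq_add_ne x hx hx1)
  have hv : a*x^d ≠ 0 := mul_ne_zero ha (pow_ne_zero d hx)
  have huv : x^d*(x^2+x) ≠ a*x^d := by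
    intro h
    apply hax
    have := mul_left_cancel₀ (pow_ne_zero d hx) (h.trans (mul_comm a (x^d)))
    exact this
  exact Eq.trans (congrArg (· * 4) (card_filter_ext _ _ _ _ _ (fun y => Iff.rfl)))
    (count_tr2 (x^d*(x^2+x)) (a*x^d) hu hv huv 0 (1 + Tr (b*x)))

lemma inC_deg_1 (d : ℕ) (a b x : F) (hx : x ≠ 0) (hx1 : x ≠ 1)
    (hcase : a = 0 ∨ a = x^2+x) (h1 : Tr (b*x) = 1) :
    (inC d a b x + 1) * 2 = Fintype.card F := by
  have hone : (if Tr (b*x) = 1 then 1 else 0) = 1 := if_pos h1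
  have hu : x^d*(x^2+x) ≠ 0 := mul_ne_zero (pow_ne_zero d hx) (sq_add_ne x hx hx1)
  have hz : (1 : ZMod 2) + 1 = 0 := by decide
  rw [← hone, inC_shape d a b x hx]
  refine Eq.trans (congrArg (· * 2) (card_filter_ext _ _ _ _ _ ?_))
    (count_tr (x^d*(x^2+x)) hu 0)
  intro y
  rw [h1, hz]
  rcases hcase with rfl | rfl
  · simp [Tr_zero]
  · constructor
    · rintro ⟨h, -⟩; exact h
    · intro h
      refine ⟨h, ?_⟩
      have e : (x^2+x)*x^d*y = x^d*(x^2+x)*y := by ring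
      rw [e, h]

lemma inC_deg_0 (d : ℕ) (a b x : F) (hx : x ≠ 0) (hx1 : x ≠ 1)
    (hcase : a = 0 ∨ a = x^2+x) (h0 : Tr (b*x) = 0) :
    inC d a b x = 0 := by
  have hzero : (if Tr (b*x) = 1 then 1 else 0) = 0 := by rw [h0]; decide
  have h := inC_shape d a b x hx
  rw [hzero, add_zero] at h
  rw [h, Finset.card_eq_zero]
  apply Finset.filter_false_of_mem
  rintro y - ⟨hA, hB⟩
  rw [h0, add_zero] at hB
  rcases hcase with rfl | rfl
  · rw [zero_mul, zero_mul, Tr_zero] at hB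
    exact one_ne_zero hB.symm
  · have e : (x^2+x)*x^d*y = x^d*(x^2+x)*y := by ring
    rw [e, hA] at hB
    exact one_ne_zero hB.symm

lemma inC_x1 (d : ℕ) (a b : F) (ha : a ≠ 0) :
    (inC d a b 1 + (if Tr b = 1 then 1 else 0)) * 2 = Fintype.card F := by
  have hb1 : b * (1:F) = b := mul_one b
  have h := inC_shape d a b 1 one_ne_zero
  rw [hb1] at h
  rw [h]
  have hu : ((1:F)^d*((1:F)^2+1)) = 0 := by
    rw [one_pow, one_pow, addself (1:F), mul_zero]
  refine Eq.trans (congrArg (· * 2) (card_filter_ext _ _ _ _ _ ?_)) (count_tr a ha (1 + Tr b))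
  intro y
  simp [addself (1:F), Tr_zero]

lemma inC_x1_a0_1 (d : ℕ) (b : F) (h1 : Tr b = 1) : inC d 0 b 1 + 1 = Fintype.card F := by
  have h := inC_shape d 0 b 1 one_ne_zero
  rw [mul_one, if_pos h1] at h
  rw [h]
  have heq : (univ.filter (fun y : F =>
      Tr (((1:F)^d*((1:F)^2+1))*y) = 0 ∧ Tr ((0*(1:F)^d)*y) = 1 + Tr b)) = univ := by
    apply Finset.filter_true_of_mem
    intro y _
    have hu : ((1:F)^d*((1:F)^2+1)) = 0 := by
      rw [one_pow, one_pow, addself (1:F), mul_zero]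
    rw [hu, zero_mul, Tr_zero, zero_mul, zero_mul, Tr_zero, h1]
    exact ⟨rfl, by decide⟩
  rw [heq, Finset.card_univ]

lemma inC_x1_a0_0 (d : ℕ) (b : F) (h0 : Tr b = 0) : inC d 0 b 1 = 0 := by
  have h := inC_shape d 0 b 1 one_ne_zero
  rw [mul_one, h0] at h
  rw [if_neg (by decide), add_zero] at h
  rw [h, Finset.card_eq_zero]
  apply Finset.filter_false_of_mem
  rintro y - ⟨-, hB⟩
  rw [zero_mul, zero_mul, Tr_zero] at hB
  exact absurd hB (by decide)

lemma pow_facts (m : ℕ) (hm : 4 ≤ m) :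
    ∃ K : ℕ, 4 ≤ K ∧ 2^(m-2) = K ∧ 2^(m-1) = 2*K ∧ 2^m = 4*K ∧
      2^(2*m-2) = 4*(K*K) ∧ 2^(2*m-1) = 8*(K*K) := by
  refine ⟨2^(m-2), ?_, rfl, ?_, ?_, ?_, ?_⟩
  · calc (4:ℕ) = 2^2 := rfl
      _ ≤ 2^(m-2) := Nat.pow_le_pow_right (by norm_num) (by omega)
  · have h : m - 1 = (m-2) + 1 := by omega
    rw [h, pow_succ]; ring
  · have h : m = (m-2) + 2 := by omega
    conv_lhs => rw [h]
    rw [pow_add]; ring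
  · have h : 2*m - 2 = ((m-2) + (m-2)) + 2 := by omega
    conv_lhs => rw [h]
    rw [pow_add, pow_add]; ring
  · have h : 2*m - 1 = ((m-2) + (m-2)) + 3 := by omega
    conv_lhs => rw [h]
    rw [pow_add, pow_add]; ring

lemma sum_split (f : F → ℕ) :
    ∑ x : F, f x = f 0 + f 1 + ∑ x ∈ ((univ.erase (0:F)).erase 1), f x := by
  have h1 : (1:F) ∈ univ.erase (0:F) := Finset.mem_erase.mpr ⟨one_ne_zero, Finset.mem_univ 1⟩
  rw [← Finset.add_sum_erase univ f (Finset.mem_univ (0:F)),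
    ← Finset.add_sum_erase _ f h1, add_assoc]

lemma mem_U {x : F} (hx : x ∈ (univ.erase (0:F)).erase 1) : x ≠ 0 ∧ x ≠ 1 := by
  rw [Finset.mem_erase, Finset.mem_erase] at hx
  exact ⟨hx.2.1, hx.1⟩

lemma count_e0 (P : F → Prop) (ip : DecidablePred P) :
    (@Finset.filter F P ip (univ.erase 0)).card + (if P 0 then 1 else 0)
      = (@Finset.filter F P ip univ).card := by
  rw [Finset.card_filter, Finset.card_filter,
    ← Finset.add_sum_erase univ (fun x => if P x then 1 else 0) (Finset.mem_univ (0:F)),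
    add_comm]

lemma count_e01 (P : F → Prop) (ip : DecidablePred P) :
    (@Finset.filter F P ip ((univ.erase 0).erase 1)).card + (if P 1 then 1 else 0)
      = (@Finset.filter F P ip (univ.erase 0)).card := by
  have h1 : (1:F) ∈ univ.erase (0:F) := Finset.mem_erase.mpr ⟨one_ne_zero, Finset.mem_univ 1⟩
  rw [Finset.card_filter, Finset.card_filter,
    ← Finset.add_sum_erase (univ.erase 0) (fun x => if P x then 1 else 0) h1,
    add_comm]

lemma count_tr' (t : ZMod 2) :
    (univ.filter fun y : F => Tr y = t).card * 2 = Fintype.card F := by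
  have h := count_tr (1:F) one_ne_zero t
  simpa using h

lemma card_U : ((univ.erase (0:F)).erase 1).card + 2 = Fintype.card F := by
  have h1 : (1:F) ∈ univ.erase (0:F) := Finset.mem_erase.mpr ⟨one_ne_zero, Finset.mem_univ 1⟩
  rw [Finset.card_erase_of_mem h1, Finset.card_erase_of_mem (Finset.mem_univ (0:F)),
    Finset.card_univ]
  have h2 : 1 < Fintype.card F := Fintype.one_lt_card
  omega

lemma wt2_00 (d : ℕ) : wt2 d (0:F) 0 = 0 := by
  rw [wt2_eq_sum]
  apply Finset.sum_eq_zero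
  intro x _
  by_cases hx : x = 0
  · rw [hx]; exact inC_x0 d 0 0
  · by_cases hx1 : x = 1
    · rw [hx1]; exact inC_x1_a0_0 d 0 Tr_zero
    · exact inC_deg_0 d 0 0 x hx hx1 (Or.inl rfl) (by rw [zero_mul, Tr_zero])

lemma wt2_a0 {m : ℕ} (d : ℕ) (hm : 4 ≤ m) (hF : Fintype.card F = 2^m) (b : F) (hb : b ≠ 0) :
    wt2 d (0:F) b = if Tr b = 1 then 2^(2*m-2) else 2^(m-1)*(2^(m-1)-1) := by
  obtain ⟨K, hK4, hK2, hK1, hKq, hKQ, hKQ'⟩ := pow_facts m hm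
  set U := ((univ.erase (0:F)).erase 1) with hU
  set β : F → ℕ := fun x => if Tr (b*x) = 1 then 1 else 0 with hβ
  have hpoint : ∀ x ∈ U, inC d 0 b x + β x = β x * (2*K) := by
    intro x hx
    obtain ⟨hx0, hx1⟩ := mem_U (hU ▸ hx)
    simp only [hβ]
    rcases z2cases (Tr (b*x)) with h | h
    · rw [inC_deg_0 d 0 b x hx0 hx1 (Or.inl rfl) h, if_neg (by rw [h]; decide)]
      simp
    · have h2 := inC_deg_1 d 0 b x hx0 hx1 (Or.inl rfl) h
      rw [hF, hKq] at h2
      rw [if_pos h]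
      omega
  have hsums : ∑ x ∈ U, inC d 0 b x + ∑ x ∈ U, β x = (∑ x ∈ U, β x) * (2*K) := by
    rw [← Finset.sum_add_distrib, Finset.sum_congr rfl hpoint, ← Finset.sum_mul]
  have hβ0 : β 0 = 0 := by
    simp only [hβ]; rw [if_neg (by rw [mul_zero, Tr_zero]; decide)]
  have hcnt : (∑ x : F, β x) * 2 = 4*K := by
    have h := count_tr b hb 1
    rw [Finset.card_filter, hF, hKq] at h
    simpa only [hβ] using h
  have hsplitβ := sum_split (F := F) β
  rw [← hU] at hsplitβ
  rw [wt2_eq_sum, sum_split, ← hU, inC_x0]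
  rcases z2cases (Tr b) with h | h
  · rw [if_neg (by rw [h]; decide)]
    rw [inC_x1_a0_0 d b h]
    have hβ1 : β 1 = 0 := by
      simp only [hβ]; rw [if_neg (by rw [mul_one, h]; decide)]
    rw [hβ1, hβ0] at hsplitβ
    have hBval : ∑ x ∈ U, β x = 2*K := by omega
    rw [hBval] at hsums
    rw [hK1]
    zify [show (1:ℕ) ≤ 2*K by omega] at hsums ⊢
    linear_combination hsums
  · rw [if_pos h]
    have h1 := inC_x1_a0_1 d b h
    rw [hF, hKq] at h1
    have hβ1 : β 1 = 1 := by
      simp only [hβ]; rw [if_pos (by rw [mul_one, h])]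
    rw [hβ1, hβ0] at hsplitβ
    have hBval : ∑ x ∈ U, β x = 2*K - 1 := by omega
    rw [hBval] at hsums
    rw [hKQ]
    zify [show (1:ℕ) ≤ 2*K by omega] at hsums h1 ⊢
    linear_combination h1 + hsums

lemma tr_sq_add (x : F) : Tr (x^2 + x) = 0 := by
  have hzz : ∀ s : ZMod 2, s + s = 0 := by decide
  rw [Tr_add, Tr_sq, hzz]

lemma wt2_T1 {m : ℕ} (d : ℕ) (hm : 4 ≤ m) (hF : Fintype.card F = 2^m) (a b : F)
    (ha : Tr a = 1) :
    wt2 d a b = if b = 0 then 2^(2*m-2) else 2^(m-1)*(2^(m-1)-1) := by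
  obtain ⟨K, hK4, hK2, hK1, hKq, hKQ, hKQ'⟩ := pow_facts m hm
  have ha0 : a ≠ 0 := by intro h; rw [h, Tr_zero] at ha; exact absurd ha (by decide)
  set U := ((univ.erase (0:F)).erase 1) with hU
  set β : F → ℕ := fun x => if Tr (b*x) = 1 then 1 else 0 with hβ
  have hpoint : ∀ x ∈ U, inC d a b x + β x = K := by
    intro x hx
    obtain ⟨hx0, hx1⟩ := mem_U (hU ▸ hx)
    have hax : x^2 + x ≠ a := by
      intro h; rw [← h, tr_sq_add] at ha; exact absurd ha (by decide)
    have h := inC_main d a b x hx0 hx1 ha0 hax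
    rw [hF, hKq] at h
    simp only [hβ]
    omega
  have hS : ∑ x ∈ U, inC d a b x + ∑ x ∈ U, β x = K * U.card := by
    rw [← Finset.sum_add_distrib, Finset.sum_congr rfl hpoint, Finset.sum_const, smul_eq_mul,
      mul_comm]
  have hUcard : U.card + 2 = 4*K := by
    have := card_U (F := F); rw [hF, hKq] at this; rw [hU]; omega
  have h1 : inC d a b 1 + β 1 = 2*K := by
    have h := inC_x1 d a b ha0
    rw [hF, hKq] at h
    simp only [hβ, mul_one]
    omega
  rw [wt2_eq_sum, sum_split, ← hU, inC_x0]
  by_cases hb : b = 0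
  · rw [if_pos hb]
    have hβz : ∀ x, β x = 0 := by
      intro x; simp only [hβ, hb, zero_mul, Tr_zero]; decide
    have hBz : ∑ x ∈ U, β x = 0 := Finset.sum_eq_zero fun x _ => hβz x
    rw [hBz, add_zero] at hS
    rw [hβz 1, add_zero] at h1
    rw [hKQ]
    have hc : U.card = 4*K - 2 := by omega
    rw [hc] at hS
    zify [show (2:ℕ) ≤ 4*K by omega] at hS h1 ⊢
    linear_combination h1 + hS
  · rw [if_neg hb]
    have hcnt : (∑ x : F, β x) * 2 = 4*K := by
      have h := count_tr b hb 1
      rw [Finset.card_filter, hF, hKq] at h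
      simpa only [hβ] using h
    have hβ0 : β 0 = 0 := by
      simp only [hβ]; rw [if_neg (by rw [mul_zero, Tr_zero]; decide)]
    have hsplitβ := sum_split (F := F) β
    rw [← hU, hβ0] at hsplitβ
    have hc : U.card = 4*K - 2 := by omega
    rw [hc] at hS
    have hcntB : β 1 + ∑ x ∈ U, β x = 2*K := by omega
    rw [hK1]
    zify [show (2:ℕ) ≤ 4*K by omega, show (1:ℕ) ≤ 2*K by omega] at hS h1 hcntB ⊢
    linear_combination h1 + hS - hcntB

lemma Uf_eq {a r : F} (ha : a ≠ 0) (hr : r^2 + r = a) :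
    (((univ.erase (0:F)).erase 1).filter (fun x => x^2 + x = a)) = {r, r+1} := by
  have hr0 : r ≠ 0 := by intro h; apply ha; rw [← hr, h]; norm_num
  have hr1 : r ≠ 1 := by intro h; apply ha; rw [← hr, h, one_pow, addself]
  have hr10 : r + 1 ≠ 0 := by
    intro h
    exact hr1 (by linear_combination h - addself (1:F))
  have hr11 : r + 1 ≠ 1 := by
    intro h
    exact hr0 (by linear_combination h)
  ext x
  rw [Finset.mem_filter, Finset.mem_erase, Finset.mem_erase]
  constructor
  · rintro ⟨⟨hx1, hx0, -⟩, hxa⟩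
    have hx : x ∈ univ.filter (fun x : F => x^2+x = r^2+r) :=
      Finset.mem_filter.mpr ⟨Finset.mem_univ x, by rw [hr]; exact hxa⟩
    rw [rootset] at hx
    exact hx
  · intro hx
    rw [Finset.mem_insert, Finset.mem_singleton] at hx
    rcases hx with rfl | rfl
    · exact ⟨⟨hr1, hr0, Finset.mem_univ _⟩, hr⟩
    · refine ⟨⟨hr11, hr10, Finset.mem_univ _⟩, ?_⟩
      rw [← hr]
      linear_combination (r+1) * addself (1:F)

lemma wt2_T0 {m : ℕ} (d : ℕ) (hm : 4 ≤ m) (hF : Fintype.card F = 2^m) (a b r : F)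
    (ha : a ≠ 0) (hr : r^2 + r = a) (hb : b ≠ 0) :
    wt2 d a b = 2^m * (2^(m-2) - 1)
      + ((if Tr (b*r) = 1 then 1 else 0) + (if Tr (b*(r+1)) = 1 then 1 else 0)) * 2^(m-1) := by
  obtain ⟨K, hK4, hK2, hK1, hKq, hKQ, hKQ'⟩ := pow_facts m hm
  set U := ((univ.erase (0:F)).erase 1) with hU
  set β : F → ℕ := fun x => if Tr (b*x) = 1 then 1 else 0 with hβ
  have hUfeq : U.filter (fun x => x^2 + x = a) = {r, r+1} := by rw [hU]; exact Uf_eq ha hr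
  -- pointwise on Uf
  have hpf : ∀ x ∈ U.filter (fun x => x^2 + x = a), inC d a b x + β x = β x * (2*K) := by
    intro x hx
    obtain ⟨hxU, hxa⟩ := Finset.mem_filter.mp hx
    obtain ⟨hx0, hx1⟩ := mem_U (hU ▸ hxU)
    simp only [hβ]
    rcases z2cases (Tr (b*x)) with h | h
    · rw [inC_deg_0 d a b x hx0 hx1 (Or.inr hxa.symm) h, if_neg (by rw [h]; decide)]
      simp
    · have h2 := inC_deg_1 d a b x hx0 hx1 (Or.inr hxa.symm) h
      rw [hF, hKq] at h2
      rw [if_pos h]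
      omega
  have hpg : ∀ x ∈ U.filter (fun x => ¬ x^2 + x = a), inC d a b x + β x = K := by
    intro x hx
    obtain ⟨hxU, hxa⟩ := Finset.mem_filter.mp hx
    obtain ⟨hx0, hx1⟩ := mem_U (hU ▸ hxU)
    have h := inC_main d a b x hx0 hx1 ha hxa
    rw [hF, hKq] at h
    simp only [hβ]
    omega
  have hSf : ∑ x ∈ U.filter (fun x => x^2 + x = a), inC d a b x
      + ∑ x ∈ U.filter (fun x => x^2 + x = a), β x
      = (∑ x ∈ U.filter (fun x => x^2 + x = a), β x) * (2*K) := by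
    rw [← Finset.sum_add_distrib, Finset.sum_congr rfl hpf, ← Finset.sum_mul]
  have hSg : ∑ x ∈ U.filter (fun x => ¬ x^2 + x = a), inC d a b x
      + ∑ x ∈ U.filter (fun x => ¬ x^2 + x = a), β x
      = K * (U.filter (fun x => ¬ x^2 + x = a)).card := by
    rw [← Finset.sum_add_distrib, Finset.sum_congr rfl hpg, Finset.sum_const, smul_eq_mul,
      mul_comm]
  have hBf : ∑ x ∈ U.filter (fun x => x^2 + x = a), β x = β r + β (r+1) := by
    rw [hUfeq]; exact Finset.sum_pair (root_ne_self r)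
  have hcards : (U.filter (fun x => x^2 + x = a)).card
      + (U.filter (fun x => ¬ x^2 + x = a)).card = U.card :=
    Finset.card_filter_add_card_filter_not _
  have hUfcard : (U.filter (fun x => x^2 + x = a)).card = 2 := by
    rw [hUfeq, Finset.card_insert_of_notMem (by simp [root_ne_self r]), Finset.card_singleton]
  have hUcard : U.card + 2 = 4*K := by
    have := card_U (F := F); rw [hF, hKq] at this; rw [hU]; omega
  have h1 : inC d a b 1 + β 1 = 2*K := by
    have h := inC_x1 d a b ha
    rw [hF, hKq] at h
    simp only [hβ, mul_one]
    omega
  have hβ0 : β 0 = 0 := by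
    simp only [hβ]; rw [if_neg (by rw [mul_zero, Tr_zero]; decide)]
  have hcnt : (∑ x : F, β x) * 2 = 4*K := by
    have h := count_tr b hb 1
    rw [Finset.card_filter, hF, hKq] at h
    simpa only [hβ] using h
  have hsplitβ := sum_split (F := F) β
  rw [← hU, hβ0] at hsplitβ
  have hsplitUβ : ∑ x ∈ U.filter (fun x => x^2 + x = a), β x
      + ∑ x ∈ U.filter (fun x => ¬ x^2 + x = a), β x = ∑ x ∈ U, β x :=
    Finset.sum_filter_add_sum_filter_not U _ β
  have hcntB : β 1 + (β r + β (r+1))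
      + ∑ x ∈ U.filter (fun x => ¬ x^2 + x = a), β x = 2*K := by omega
  have hcardg : (U.filter (fun x => ¬ x^2 + x = a)).card = 4*K - 4 := by omega
  rw [hcardg] at hSg
  rw [hBf] at hSf
  rw [wt2_eq_sum, sum_split, ← hU, inC_x0,
    ← Finset.sum_filter_add_sum_filter_not U (fun x => x^2 + x = a) (fun x => inC d a b x),
    hKq, hK2, hK1]
  simp only [hβ] at hSf hSg h1 hcntB ⊢
  zify [show (4:ℕ) ≤ 4*K by omega, show (1:ℕ) ≤ K by omega] at hSf hSg h1 hcntB ⊢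
  linear_combination h1 + hSf + hSg - hcntB

lemma wt2_T0b0 {m : ℕ} (d : ℕ) (hm : 4 ≤ m) (hF : Fintype.card F = 2^m) (a r : F)
    (ha : a ≠ 0) (hr : r^2 + r = a) :
    wt2 d a 0 = 2^(m-1)*(2^(m-1)-1) := by
  obtain ⟨K, hK4, hK2, hK1, hKq, hKQ, hKQ'⟩ := pow_facts m hm
  set U := ((univ.erase (0:F)).erase 1) with hU
  have hβz : ∀ x : F, Tr ((0:F)*x) = 0 := by intro x; rw [zero_mul, Tr_zero]
  have hpf : ∀ x ∈ U.filter (fun x => x^2 + x = a), inC d a 0 x = 0 := by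
    intro x hx
    obtain ⟨hxU, hxa⟩ := Finset.mem_filter.mp hx
    obtain ⟨hx0, hx1⟩ := mem_U (hU ▸ hxU)
    exact inC_deg_0 d a 0 x hx0 hx1 (Or.inr hxa.symm) (hβz x)
  have hpg : ∀ x ∈ U.filter (fun x => ¬ x^2 + x = a), inC d a 0 x = K := by
    intro x hx
    obtain ⟨hxU, hxa⟩ := Finset.mem_filter.mp hx
    obtain ⟨hx0, hx1⟩ := mem_U (hU ▸ hxU)
    have h := inC_main d a 0 x hx0 hx1 ha hxa
    rw [hF, hKq, if_neg (by rw [hβz x]; decide)] at h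
    omega
  have hSf : ∑ x ∈ U.filter (fun x => x^2 + x = a), inC d a 0 x = 0 :=
    Finset.sum_eq_zero hpf
  have hSg : ∑ x ∈ U.filter (fun x => ¬ x^2 + x = a), inC d a 0 x
      = K * (U.filter (fun x => ¬ x^2 + x = a)).card := by
    rw [Finset.sum_congr rfl hpg, Finset.sum_const, smul_eq_mul, mul_comm]
  have hUfeq : U.filter (fun x => x^2 + x = a) = {r, r+1} := by rw [hU]; exact Uf_eq ha hr
  have hcards : (U.filter (fun x => x^2 + x = a)).card
      + (U.filter (fun x => ¬ x^2 + x = a)).card = U.card :=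
    Finset.card_filter_add_card_filter_not _
  have hUfcard : (U.filter (fun x => x^2 + x = a)).card = 2 := by
    rw [hUfeq, Finset.card_insert_of_notMem (by simp [root_ne_self r]), Finset.card_singleton]
  have hUcard : U.card + 2 = 4*K := by
    have := card_U (F := F); rw [hF, hKq] at this; rw [hU]; omega
  have h1 : inC d a 0 1 = 2*K := by
    have h := inC_x1 d a 0 ha
    rw [hF, hKq, if_neg (by rw [Tr_zero]; decide)] at h
    omega
  have hcardg : (U.filter (fun x => ¬ x^2 + x = a)).card = 4*K - 4 := by omega
  rw [hcardg] at hSg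
  rw [wt2_eq_sum, sum_split, ← hU, inC_x0,
    ← Finset.sum_filter_add_sum_filter_not U (fun x => x^2 + x = a) (fun x => inC d a 0 x),
    hK1, hSf, hSg, h1]
  zify [show (4:ℕ) ≤ 4*K by omega, show (1:ℕ) ≤ 2*K by omega]
  ring

lemma wfacts (m : ℕ) (hm : 4 ≤ m) :
    ∃ K M : ℕ, 4 ≤ K ∧ 4*K ≤ M ∧ M = K*K ∧
      2^(m-2) = K ∧ 2^(m-1) = 2*K ∧ 2^m = 4*K ∧
      2^m*(2^(m-2)-1) = 4*M - 4*K ∧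
      2^(m-1)*(2^(m-1)-1) = 4*M - 2*K ∧
      2^(2*m-2) = 4*M ∧ 2^(2*m-1) = 8*M ∧
      2^(m-2)*(2^(m-1)-3) + 1 = 2*M - 3*K + 1 ∧
      3*2^(2*m-2) - 2 = 12*M - 2 ∧
      2^(m-2)*(2^(m-1)+3) = 2*M + 3*K := by
  obtain ⟨K, hK4, hK2, hK1, hKq, hKQ, hKQ'⟩ := pow_facts m hm
  refine ⟨K, K*K, hK4, by nlinarith, rfl, hK2, hK1, hKq, ?_, ?_, ?_, ?_, ?_, ?_, ?_⟩
  · rw [hKq, hK2]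
    zify [show (1:ℕ) ≤ K by omega, show 4*K ≤ 4*(K*K) by nlinarith]
    ring
  · rw [hK1]
    zify [show (1:ℕ) ≤ 2*K by omega, show 2*K ≤ 4*(K*K) by nlinarith]
    ring
  · rw [hKQ]
  · rw [hKQ']
  · rw [hK2, hK1]
    zify [show (3:ℕ) ≤ 2*K by omega, show 3*K ≤ 2*(K*K) by nlinarith]
    ring
  · rw [hKQ]
    zify [show (2:ℕ) ≤ 3*(4*(K*K)) by nlinarith, show (2:ℕ) ≤ 12*(K*K) by nlinarith]
    ring
  · rw [hK2, hK1]
    zify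
    ring

lemma card_ne0 (p : F → Prop) (ipc : DecidablePred (fun b : F => b ≠ 0 ∧ p b))
    (ip : DecidablePred p) :
    (@Finset.filter F (fun b => b ≠ 0 ∧ p b) ipc univ).card + (if p 0 then 1 else 0)
      = (@Finset.filter F p ip univ).card := by
  rw [Finset.card_filter, Finset.card_filter,
    ← Finset.add_sum_erase univ (fun b => if b ≠ 0 ∧ p b then 1 else 0) (Finset.mem_univ (0:F)),
    ← Finset.add_sum_erase univ (fun b => if p b then 1 else 0) (Finset.mem_univ (0:F))]
  have h0 : (if (0:F) ≠ 0 ∧ p 0 then 1 else 0) = 0 := by simp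
  rw [h0, zero_add, add_comm]
  congr 1
  apply Finset.sum_congr rfl
  intro b hb
  have hb0 : b ≠ 0 := Finset.ne_of_mem_erase hb
  simp [hb0]

lemma cnt_a0 {m : ℕ} (d : ℕ) (hm : 4 ≤ m) (hF : Fintype.card F = 2^m) :
    ((univ.filter fun b : F => wt2 d (0:F) b = 2^m*(2^(m-2)-1)).card = 0)
    ∧ ((univ.filter fun b : F => wt2 d (0:F) b = 2^(m-1)*(2^(m-1)-1)).card = 2^(m-1) - 1)
    ∧ ((univ.filter fun b : F => wt2 d (0:F) b = 2^(2*m-2)).card = 2^(m-1)) := by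
  obtain ⟨K, M, hK4, hKM, hMK, hK2, hK1, hKq, hw1, hw2, hw3, hw3', hf1, hf2, hf3⟩ := wfacts m hm
  have h0ne : (Tr (0:F)) ≠ 1 := by rw [Tr_zero]; decide
  refine ⟨?_, ?_, ?_⟩
  · rw [Finset.card_eq_zero]
    apply Finset.filter_false_of_mem
    intro b _
    by_cases hb : b = 0
    · rw [hb, wt2_00]; omega
    · rw [wt2_a0 d hm hF b hb]
      rcases z2cases (Tr b) with h | h
      · rw [if_neg (by rw [h]; decide)]; omega
      · rw [if_pos h]; omega
  · have he : (univ.filter fun b : F => wt2 d (0:F) b = 2^(m-1)*(2^(m-1)-1)).card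
        = (univ.filter fun b : F => b ≠ 0 ∧ Tr b = (0:ZMod 2)).card := by
      apply card_filter_ext
      intro b
      by_cases hb : b = 0
      · rw [hb, wt2_00]
        constructor
        · intro h; omega
        · rintro ⟨h, -⟩; exact absurd rfl h
      · rw [wt2_a0 d hm hF b hb]
        rcases z2cases (Tr b) with h | h
        · rw [if_neg (by rw [h]; decide)]
          exact ⟨fun _ => ⟨hb, h⟩, fun _ => rfl⟩
        · rw [if_pos h]
          constructor
          · intro hq; omega
          · rintro ⟨-, h0⟩; rw [h] at h0; exact absurd h0 (by decide)
    rw [he]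
    have hcard : (univ.filter fun b : F => b ≠ 0 ∧ Tr b = (0:ZMod 2)).card
        + (if Tr (0:F) = (0:ZMod 2) then 1 else 0)
        = (univ.filter fun b : F => Tr b = (0:ZMod 2)).card := card_ne0 _ _ _
    rw [if_pos Tr_zero] at hcard
    have hfull := count_tr' (F := F) (0:ZMod 2)
    rw [hF, hKq] at hfull
    rw [hK1]
    omega
  · have he : (univ.filter fun b : F => wt2 d (0:F) b = 2^(2*m-2)).card
        = (univ.filter fun b : F => Tr b = (1:ZMod 2)).card := by
      apply card_filter_ext
      intro b
      by_cases hb : b = 0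
      · rw [hb, wt2_00]
        constructor
        · intro h; omega
        · intro h; exact absurd h h0ne
      · rw [wt2_a0 d hm hF b hb]
        rcases z2cases (Tr b) with h | h
        · rw [if_neg (by rw [h]; decide)]
          constructor
          · intro hq; omega
          · intro h1; rw [h] at h1; exact absurd h1 (by decide)
        · rw [if_pos h]
          exact ⟨fun _ => h, fun _ => rfl⟩
    rw [he]
    have hfull := count_tr' (F := F) (1:ZMod 2)
    rw [hF, hKq] at hfull
    rw [hK1]
    omega

lemma cnt_T1 {m : ℕ} (d : ℕ) (hm : 4 ≤ m) (hF : Fintype.card F = 2^m) (a : F)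
    (ha : Tr a = 1) :
    ((univ.filter fun b : F => wt2 d a b = 2^m*(2^(m-2)-1)).card = 0)
    ∧ ((univ.filter fun b : F => wt2 d a b = 2^(m-1)*(2^(m-1)-1)).card = 2^m - 1)
    ∧ ((univ.filter fun b : F => wt2 d a b = 2^(2*m-2)).card = 1) := by
  obtain ⟨K, M, hK4, hKM, hMK, hK2, hK1, hKq, hw1, hw2, hw3, hw3', hf1, hf2, hf3⟩ := wfacts m hm
  have hC1 : (univ.filter fun b : F => wt2 d a b = 2^m*(2^(m-2)-1)).card = 0 := by
    rw [Finset.card_eq_zero]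
    apply Finset.filter_false_of_mem
    intro b _
    rw [wt2_T1 d hm hF a b ha]
    by_cases hb : b = 0
    · rw [if_pos hb, hw1, hw3]; omega
    · rw [if_neg hb, hw1, hw2]; omega
  have hC3 : (univ.filter fun b : F => wt2 d a b = 2^(2*m-2)).card = 1 := by
    have he : (univ.filter fun b : F => wt2 d a b = 2^(2*m-2)).card
        = (univ.filter fun b : F => b = (0:F)).card := by
      apply card_filter_ext
      intro b
      rw [wt2_T1 d hm hF a b ha]
      by_cases hb : b = 0
      · rw [if_pos hb]
        exact ⟨fun _ => hb, fun _ => rfl⟩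
      · rw [if_neg hb, hw2, hw3]
        exact ⟨fun h => by omega, fun h => absurd h hb⟩
    rw [he]
    have : (univ.filter fun b : F => b = (0:F)) = {0} := by
      ext b; simp
    rw [this, Finset.card_singleton]
  have hpart : ∀ b : F,
      ((if wt2 d a b = 2^m*(2^(m-2)-1) then 1 else 0)
      + (if wt2 d a b = 2^(m-1)*(2^(m-1)-1) then 1 else 0))
      + (if wt2 d a b = 2^(2*m-2) then 1 else 0) = 1 := by
    intro b
    rw [wt2_T1 d hm hF a b ha]
    by_cases hb : b = 0
    · rw [if_pos hb, hw1, hw2, hw3,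
        if_neg (by omega), if_neg (by omega), if_pos rfl]
    · rw [if_neg hb, hw1, hw2, hw3,
        if_neg (by omega), if_pos rfl, if_neg (by omega)]
  have htot : ((univ.filter fun b : F => wt2 d a b = 2^m*(2^(m-2)-1)).card
      + (univ.filter fun b : F => wt2 d a b = 2^(m-1)*(2^(m-1)-1)).card)
      + (univ.filter fun b : F => wt2 d a b = 2^(2*m-2)).card = 4*K := by
    rw [Finset.card_filter, Finset.card_filter, Finset.card_filter,
      ← Finset.sum_add_distrib, ← Finset.sum_add_distrib,
      Finset.sum_congr rfl (fun b _ => hpart b), Finset.sum_const, smul_eq_mul, mul_one,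
      Finset.card_univ, hF, hKq]
  refine ⟨hC1, ?_, hC3⟩
  rw [hKq]
  omega

lemma cnt_T0 {m : ℕ} (d : ℕ) (hm : 4 ≤ m) (hF : Fintype.card F = 2^m) (a : F)
    (ha0 : a ≠ 0) (ha : Tr a = 0) :
    ((univ.filter fun b : F => wt2 d a b = 2^m*(2^(m-2)-1)).card = 2^(m-2) - 1)
    ∧ ((univ.filter fun b : F => wt2 d a b = 2^(m-1)*(2^(m-1)-1)).card = 2^(m-1) + 1)
    ∧ ((univ.filter fun b : F => wt2 d a b = 2^(2*m-2)).card = 2^(m-2)) := by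
  obtain ⟨K, M, hK4, hKM, hMK, hK2, hK1, hKq, hw1, hw2, hw3, hw3', hf1, hf2, hf3⟩ := wfacts m hm
  obtain ⟨r, hr⟩ := exists_root a ha
  have hr0 : r ≠ 0 := by intro h; apply ha0; rw [← hr, h]; norm_num
  have hr10 : r + 1 ≠ 0 := by
    intro h
    have h1 : r = 1 := by linear_combination h - addself (1:F)
    apply ha0; rw [← hr, h1, one_pow, addself]
  have hrr : r ≠ r + 1 := root_ne_self r
  have hT0' : ∀ b : F, b ≠ 0 → wt2 d a b = 2^m * (2^(m-2) - 1)
      + ((if Tr (b*r) = 1 then 1 else 0) + (if Tr (b*(r+1)) = 1 then 1 else 0)) * 2^(m-1) :=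
    fun b hb => wt2_T0 d hm hF a b r ha0 hr hb
  have hC1 : (univ.filter fun b : F => wt2 d a b = 2^m*(2^(m-2)-1)).card = 2^(m-2) - 1 := by
    have he : (univ.filter fun b : F => wt2 d a b = 2^m*(2^(m-2)-1)).card
        = (univ.filter fun b : F => b ≠ 0 ∧ (Tr (r*b) = 0 ∧ Tr ((r+1)*b) = 0)).card := by
      apply card_filter_ext
      intro b
      by_cases hb : b = 0
      · rw [hb, wt2_T0b0 d hm hF a r ha0 hr, hw1, hw2]
        constructor
        · intro h; omega
        · rintro ⟨h, -⟩; exact absurd rfl h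
      · rw [hT0' b hb, hw1, hK1, mul_comm b r, mul_comm b (r+1)]
        rcases z2cases (Tr (r*b)) with h1 | h1 <;> rcases z2cases (Tr ((r+1)*b)) with h2 | h2
        · rw [if_neg (by rw [h1]; decide), if_neg (by rw [h2]; decide)]
          exact ⟨fun _ => ⟨hb, h1, h2⟩, fun _ => by omega⟩
        · rw [if_neg (by rw [h1]; decide), if_pos h2]
          constructor
          · intro hq; exact absurd hq (by omega)
          · rintro ⟨-, -, hc⟩; rw [h2] at hc; exact absurd hc (by decide)
        · rw [if_pos h1, if_neg (by rw [h2]; decide)]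
          constructor
          · intro hq; exact absurd hq (by omega)
          · rintro ⟨-, hc, -⟩; rw [h1] at hc; exact absurd hc (by decide)
        · rw [if_pos h1, if_pos h2]
          constructor
          · intro hq; exact absurd hq (by omega)
          · rintro ⟨-, hc, -⟩; rw [h1] at hc; exact absurd hc (by decide)
    rw [he]
    have hcard : (univ.filter fun b : F => b ≠ 0 ∧ (Tr (r*b) = 0 ∧ Tr ((r+1)*b) = 0)).card
        + (if (Tr (r*(0:F)) = 0 ∧ Tr ((r+1)*(0:F)) = 0) then 1 else 0)
        = (univ.filter fun y : F => Tr (r*y) = 0 ∧ Tr ((r+1)*y) = 0).card := card_ne0 _ _ _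
    rw [if_pos ⟨by rw [mul_zero, Tr_zero], by rw [mul_zero, Tr_zero]⟩] at hcard
    have hfull := count_tr2 r (r+1) hr0 hr10 hrr 0 0
    rw [hF, hKq] at hfull
    omega
  have hC3 : (univ.filter fun b : F => wt2 d a b = 2^(2*m-2)).card = 2^(m-2) := by
    have he : (univ.filter fun b : F => wt2 d a b = 2^(2*m-2)).card
        = (univ.filter fun y : F => Tr (r*y) = 1 ∧ Tr ((r+1)*y) = 1).card := by
      apply card_filter_ext
      intro b
      by_cases hb : b = 0
      · rw [hb, wt2_T0b0 d hm hF a r ha0 hr, hw2, hw3]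
        constructor
        · intro h; omega
        · rintro ⟨hc, -⟩; rw [mul_zero, Tr_zero] at hc; exact absurd hc (by decide)
      · rw [hT0' b hb, hw1, hw3, hK1, mul_comm b r, mul_comm b (r+1)]
        rcases z2cases (Tr (r*b)) with h1 | h1 <;> rcases z2cases (Tr ((r+1)*b)) with h2 | h2
        · rw [if_neg (by rw [h1]; decide), if_neg (by rw [h2]; decide)]
          constructor
          · intro hq; exact absurd hq (by omega)
          · rintro ⟨hc, -⟩; rw [h1] at hc; exact absurd hc (by decide)
        · rw [if_neg (by rw [h1]; decide), if_pos h2]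
          constructor
          · intro hq; exact absurd hq (by omega)
          · rintro ⟨hc, -⟩; rw [h1] at hc; exact absurd hc (by decide)
        · rw [if_pos h1, if_neg (by rw [h2]; decide)]
          constructor
          · intro hq; exact absurd hq (by omega)
          · rintro ⟨-, hc⟩; rw [h2] at hc; exact absurd hc (by decide)
        · rw [if_pos h1, if_pos h2]
          exact ⟨fun _ => ⟨h1, h2⟩, fun _ => by omega⟩
    rw [he]
    have hfull := count_tr2 r (r+1) hr0 hr10 hrr 1 1
    rw [hF, hKq] at hfull
    omega
  have hpart : ∀ b : F,
      ((if wt2 d a b = 2^m*(2^(m-2)-1) then 1 else 0)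
      + (if wt2 d a b = 2^(m-1)*(2^(m-1)-1) then 1 else 0))
      + (if wt2 d a b = 2^(2*m-2) then 1 else 0) = 1 := by
    intro b
    by_cases hb : b = 0
    · rw [hb, wt2_T0b0 d hm hF a r ha0 hr, hw1, hw2, hw3,
        if_neg (by omega), if_pos rfl, if_neg (by omega)]
    · have hite0 : (if (0:ZMod 2) = 1 then (1:ℕ) else 0) = 0 := if_neg (by decide)
      have hite1 : (if (1:ZMod 2) = 1 then (1:ℕ) else 0) = 1 := if_pos rfl
      rw [hT0' b hb, hw1, hw2, hw3, hK1]
      rcases z2cases (Tr (b*r)) with h1 | h1 <;> rcases z2cases (Tr (b*(r+1))) with h2 | h2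
      · rw [h1, h2, hite0, if_pos (by omega), if_neg (by omega), if_neg (by omega)]
      · rw [h1, h2, hite0, hite1, if_neg (by omega), if_pos (by omega), if_neg (by omega)]
      · rw [h1, h2, hite0, hite1, if_neg (by omega), if_pos (by omega), if_neg (by omega)]
      · rw [h1, h2, hite1, if_neg (by omega), if_neg (by omega), if_pos (by omega)]
  have htot : ((univ.filter fun b : F => wt2 d a b = 2^m*(2^(m-2)-1)).card
      + (univ.filter fun b : F => wt2 d a b = 2^(m-1)*(2^(m-1)-1)).card)
      + (univ.filter fun b : F => wt2 d a b = 2^(2*m-2)).card = 4*K := by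
    rw [Finset.card_filter, Finset.card_filter, Finset.card_filter,
      ← Finset.sum_add_distrib, ← Finset.sum_add_distrib,
      Finset.sum_congr rfl (fun b _ => hpart b), Finset.sum_const, smul_eq_mul, mul_one,
      Finset.card_univ, hF, hKq]
  refine ⟨hC1, by omega, hC3⟩

noncomputable def inD (d : ℕ) (x : F) : ℕ :=
  (univ.filter fun y : F => x ≠ 0 ∧ y ≠ 0 ∧ Tr (x^(d+2)*y + x^(d+1)*y) = 0).card

lemma D2_eq_sum (d : ℕ) : (D2 F d).card = ∑ x : F, inD d x := by
  have h := card_prod_filter (P := fun q : F × F =>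
    q.1 ≠ 0 ∧ q.2 ≠ 0 ∧ Tr (q.1^(d+2)*q.2 + q.1^(d+1)*q.2) = 0)
  unfold D2 inD
  refine (card_filter_ext _ _ _ _ _ (fun q => Iff.rfl)).trans (h.trans ?_)
  exact Finset.sum_congr rfl fun x _ => card_filter_ext _ _ _ _ _ (fun y => Iff.rfl)

lemma inD_x0 (d : ℕ) : inD d (0:F) = 0 := by
  unfold inD
  rw [Finset.card_eq_zero]
  apply Finset.filter_false_of_mem
  rintro y - ⟨h, -⟩
  exact h rfl

lemma inD_shape (d : ℕ) (x : F) (hx : x ≠ 0) :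
    inD d x + 1 = (univ.filter fun y : F => Tr ((x^d*(x^2+x))*y) = 0).card := by
  have h1 : inD d x = (univ.filter fun y : F => y ≠ 0 ∧
      Tr ((x^d*(x^2+x))*y) = 0).card := by
    unfold inD
    congr 1
    ext y
    simp only [Finset.mem_filter, Finset.mem_univ, true_and]
    have e1 : x^(d+2)*y + x^(d+1)*y = (x^d*(x^2+x))*y := by ring
    rw [e1]
    constructor
    · rintro ⟨-, hy, h0⟩; exact ⟨hy, h0⟩
    · rintro ⟨hy, h0⟩; exact ⟨hx, hy, h0⟩
  rw [h1]
  refine Eq.trans (congrArg₂ HAdd.hAdd (card_filter_ext _ _ _ _ _ (fun y => Iff.rfl)) ?_)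
    ((drop_zero (P := fun y : F => Tr ((x^d*(x^2+x))*y) = 0)).trans
      (card_filter_ext _ _ _ _ _ (fun y => Iff.rfl)))
  exact (if_pos (by rw [mul_zero, Tr_zero])).symm

lemma inD_x1 (d : ℕ) : inD d (1:F) + 1 = Fintype.card F := by
  rw [inD_shape d 1 one_ne_zero]
  have heq : (univ.filter (fun y : F =>
      Tr (((1:F)^d*((1:F)^2+1))*y) = 0)) = univ := by
    apply Finset.filter_true_of_mem
    intro y _
    rw [one_pow, one_pow, addself (1:F), mul_zero, zero_mul, Tr_zero]
  rw [heq, Finset.card_univ]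

lemma inD_main (d : ℕ) (x : F) (hx : x ≠ 0) (hx1 : x ≠ 1) :
    (inD d x + 1) * 2 = Fintype.card F := by
  rw [inD_shape d x hx]
  exact count_tr (x^d*(x^2+x)) (mul_ne_zero (pow_ne_zero d hx) (sq_add_ne x hx hx1)) 0

lemma D2_card {m : ℕ} (d : ℕ) (hm : 4 ≤ m) (hF : Fintype.card F = 2^m) :
    (D2 F d).card = 2^(2*m-1) - 2^m + 1 := by
  obtain ⟨K, M, hK4, hKM, hMK, hK2, hK1, hKq, hw1, hw2, hw3, hw3', hf1, hf2, hf3⟩ := wfacts m hm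
  rw [D2_eq_sum, sum_split, inD_x0]
  have h1 := inD_x1 (F := F) d
  rw [hF, hKq] at h1
  have hpoint : ∀ x ∈ ((univ.erase (0:F)).erase 1), inD d x + 1 = 2*K := by
    intro x hx
    obtain ⟨hx0, hx1⟩ := mem_U hx
    have h := inD_main d x hx0 hx1
    rw [hF, hKq] at h
    omega
  have hS := Finset.sum_congr rfl hpoint
  rw [Finset.sum_add_distrib, Finset.sum_const, Finset.sum_const, smul_eq_mul, smul_eq_mul,
    mul_one] at hS
  have hUcard : ((univ.erase (0:F)).erase 1).card + 2 = 4*K := by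
    have := card_U (F := F); rw [hF, hKq] at this; omega
  have hcg : ((univ.erase (0:F)).erase 1).card = 4*K - 2 := by omega
  rw [hcg] at hS
  rw [hw3', hKq]
  have e : (4*K-2)*(2*K) = 8*M - 4*K := by
    rw [hMK]
    zify [show (2:ℕ) ≤ 4*K by omega, show 4*K ≤ 8*(K*K) by nlinarith]
    ring
  omega

lemma wt_lb {m : ℕ} (d : ℕ) (hm : 4 ≤ m) (hF : Fintype.card F = 2^m) (a b : F)
    (hab : ¬(a = 0 ∧ b = 0)) :
    2^m * (2^(m-2) - 1) ≤ wt2 d a b := by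
  obtain ⟨K, M, hK4, hKM, hMK, hK2, hK1, hKq, hw1, hw2, hw3, hw3', hf1, hf2, hf3⟩ := wfacts m hm
  by_cases ha : a = 0
  · have hb : b ≠ 0 := fun h => hab ⟨ha, h⟩
    rw [ha, wt2_a0 d hm hF b hb, hw1]
    rcases z2cases (Tr b) with h | h
    · rw [if_neg (by rw [h]; decide), hw2]; omega
    · rw [if_pos h, hw3]; omega
  · rcases z2cases (Tr a) with h | h
    · obtain ⟨r, hr⟩ := exists_root a h
      by_cases hb : b = 0
      · rw [hb, wt2_T0b0 d hm hF a r ha hr, hw1, hw2]; omega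
      · rw [wt2_T0 d hm hF a b r ha hr hb]
        exact Nat.le_add_right _ _
    · rw [wt2_T1 d hm hF a b h, hw1]
      by_cases hb : b = 0
      · rw [if_pos hb, hw3]; omega
      · rw [if_neg hb, hw2]; omega

lemma freq_assemble {m : ℕ} (d : ℕ) (hm : 4 ≤ m) (hF : Fintype.card F = 2^m)
    (w : ℕ) (c0 cT1 cT0 : ℕ)
    (h0 : (univ.filter fun b : F => wt2 d (0:F) b = w).card = c0)
    (h1 : ∀ a : F, Tr a = 1 → (univ.filter fun b : F => wt2 d a b = w).card = cT1)
    (h2 : ∀ a : F, a ≠ 0 → Tr a = 0 → (univ.filter fun b : F => wt2 d a b = w).card = cT0) :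
    (univ.filter fun ab : F × F => wt2 d ab.1 ab.2 = w).card
      = c0 + 2^(m-1) * cT1 + (2^(m-1) - 1) * cT0 := by
  obtain ⟨K, M, hK4, hKM, hMK, hK2, hK1, hKq, hw1, hw2, hw3, hw3', hf1, hf2, hf3⟩ := wfacts m hm
  set β : F → ℕ := fun a => if Tr a = 1 then 1 else 0 with hβ
  have hprod := card_prod_filter (P := fun ab : F × F => wt2 d ab.1 ab.2 = w)
  have hN : (univ.filter fun ab : F × F => wt2 d ab.1 ab.2 = w).card
      = ∑ a : F, (univ.filter fun b : F => wt2 d a b = w).card := by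
    refine (card_filter_ext _ _ _ _ _ (fun q => Iff.rfl)).trans (hprod.trans ?_)
    exact Finset.sum_congr rfl fun a _ => card_filter_ext _ _ _ _ _ (fun b => Iff.rfl)
  rw [hN, ← Finset.add_sum_erase univ _ (Finset.mem_univ (0:F)), h0]
  have hpoint : ∀ a ∈ univ.erase (0:F),
      (univ.filter fun b : F => wt2 d a b = w).card + cT0 * β a = cT1 * β a + cT0 := by
    intro a haE
    have ha0 : a ≠ 0 := Finset.ne_of_mem_erase haE
    simp only [hβ]
    rcases z2cases (Tr a) with h | h
    · rw [h2 a ha0 h, if_neg (by rw [h]; decide)]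
      simp
    · rw [h1 a h, if_pos h]
      ring
  have hS : ∑ a ∈ univ.erase (0:F), (univ.filter fun b : F => wt2 d a b = w).card
      + cT0 * (∑ a ∈ univ.erase (0:F), β a)
      = cT1 * (∑ a ∈ univ.erase (0:F), β a) + cT0 * (univ.erase (0:F)).card := by
    calc ∑ a ∈ univ.erase (0:F), (univ.filter fun b : F => wt2 d a b = w).card
        + cT0 * (∑ a ∈ univ.erase (0:F), β a)
        = ∑ a ∈ univ.erase (0:F),
            ((univ.filter fun b : F => wt2 d a b = w).card + cT0 * β a) := by
          rw [Finset.mul_sum, Finset.sum_add_distrib]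
      _ = ∑ a ∈ univ.erase (0:F), (cT1 * β a + cT0) := Finset.sum_congr rfl hpoint
      _ = cT1 * (∑ a ∈ univ.erase (0:F), β a) + cT0 * (univ.erase (0:F)).card := by
          rw [Finset.sum_add_distrib, Finset.mul_sum, Finset.sum_const, smul_eq_mul,
            mul_comm cT0]
  have hβ0 : β 0 = 0 := by
    simp only [hβ]; rw [if_neg (by rw [Tr_zero]; decide)]
  have hBtot : (∑ a : F, β a) = (univ.filter fun a : F => Tr a = (1:ZMod 2)).card := by
    rw [Finset.card_filter]
  have hcnt := count_tr' (F := F) (1:ZMod 2)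
  rw [hF, hKq] at hcnt
  have hsplit := Finset.add_sum_erase univ β (Finset.mem_univ (0:F))
  rw [hβ0, zero_add] at hsplit
  have hB : ∑ a ∈ univ.erase (0:F), β a = 2*K := by omega
  have hE : (univ.erase (0:F)).card + 1 = 4*K := by
    rw [Finset.card_erase_of_mem (Finset.mem_univ (0:F)), Finset.card_univ, hF, hKq]
    omega
  have hEc : (univ.erase (0:F)).card = 4*K - 1 := by omega
  rw [hB, hEc] at hS
  rw [hK1]
  zify [show (1:ℕ) ≤ 4*K by omega, show (1:ℕ) ≤ 2*K by omega] at hS ⊢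
  linear_combination hS

lemma inj_code (m d : ℕ) (hm : 4 ≤ m) (hF : Fintype.card F = 2 ^ m) :
    Function.Injective (fun ab : F × F => fun q : (D2 F d) =>
      Tr (ab.1 * q.1.1 ^ d * q.1.2 + ab.2 * q.1.1)) := by
  obtain ⟨K, M, hK4, hKM, hMK, hK2, hK1, hKq, hw1, hw2, hw3, hw3', hf1, hf2, hf3⟩ := wfacts m hm
  have hzz : ∀ s : ZMod 2, s + s = 0 := by decide
  rintro ⟨a1, b1⟩ ⟨a2, b2⟩ h
  simp only at h
  have hwt : wt2 d (a1 + a2) (b1 + b2) = 0 := by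
    unfold wt2
    rw [Finset.card_eq_zero]
    apply Finset.filter_false_of_mem
    intro q hq
    have hcong := congrFun h (⟨q, hq⟩ : (D2 F d))
    simp only at hcong
    have e : (a1 + a2) * q.1 ^ d * q.2 + (b1 + b2) * q.1
        = (a1 * q.1 ^ d * q.2 + b1 * q.1) + (a2 * q.1 ^ d * q.2 + b2 * q.1) := by ring
    rw [e, Tr_add, hcong, hzz]
    decide
  have hz : a1 + a2 = 0 ∧ b1 + b2 = 0 := by
    by_contra hab
    have := wt_lb d hm hF (a1 + a2) (b1 + b2) hab
    rw [hwt, hw1] at this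
    omega
  have e1 : a1 = a2 := by
    have := hz.1
    linear_combination this - addself a2
  have e2 : b1 = b2 := by
    have := hz.2
    linear_combination this - addself b2
  rw [e1, e2]

theorem stmt16 (m d : ℕ) (hm : 4 ≤ m) (hd : 1 ≤ d) (hF : Fintype.card F = 2 ^ m) :
    -- length
    (D2 F d).card = 2 ^ (2 * m - 1) - 2 ^ m + 1 ∧
    -- dimension 2m
    Function.Injective (fun ab : F × F => fun q : (D2 F d) =>
      Tr (ab.1 * q.1.1 ^ d * q.1.2 + ab.2 * q.1.1)) ∧
    -- minimum distance
    (∀ a b : F, (a, b) ≠ (0, 0) → 2 ^ m * (2 ^ (m - 2) - 1) ≤ wt2 d a b) ∧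
    -- weight distribution
    (univ.filter fun ab : F × F => wt2 d ab.1 ab.2 = 2 ^ m * (2 ^ (m - 2) - 1)).card
      = 2 ^ (m - 2) * (2 ^ (m - 1) - 3) + 1 ∧
    (univ.filter fun ab : F × F => wt2 d ab.1 ab.2 = 2 ^ (m - 1) * (2 ^ (m - 1) - 1)).card
      = 3 * 2 ^ (2 * m - 2) - 2 ∧
    (univ.filter fun ab : F × F => wt2 d ab.1 ab.2 = 2 ^ (2 * m - 2)).card
      = 2 ^ (m - 2) * (2 ^ (m - 1) + 3) := by
  obtain ⟨K, M, hK4, hKM, hMK, hK2, hK1, hKq, hw1, hw2, hw3, hw3', hf1, hf2, hf3⟩ := wfacts m hm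
  refine ⟨D2_card d hm hF, inj_code m d hm hF, ?_, ?_, ?_, ?_⟩
  · intro a b hab
    apply wt_lb d hm hF a b
    rintro ⟨ha, hb⟩
    exact hab (by rw [ha, hb])
  · have h := freq_assemble d hm hF (2^m*(2^(m-2)-1)) 0 0 (2^(m-2)-1)
      (cnt_a0 d hm hF).1 (fun a ha => (cnt_T1 d hm hF a ha).1)
      (fun a ha0 ha => (cnt_T0 d hm hF a ha0 ha).1)
    rw [h, hf1, hK1, hK2, hMK]
    zify [show (1:ℕ) ≤ 2*K by omega, show (1:ℕ) ≤ K by omega,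
      show 3*K ≤ 2*(K*K) by nlinarith]
    ring
  · have h := freq_assemble d hm hF (2^(m-1)*(2^(m-1)-1)) (2^(m-1)-1) (2^m-1) (2^(m-1)+1)
      (cnt_a0 d hm hF).2.1 (fun a ha => (cnt_T1 d hm hF a ha).2.1)
      (fun a ha0 ha => (cnt_T0 d hm hF a ha0 ha).2.1)
    rw [h, hf2, hK1, hKq, hMK]
    zify [show (1:ℕ) ≤ 2*K by omega, show (1:ℕ) ≤ 4*K by omega,
      show (2:ℕ) ≤ 12*(K*K) by nlinarith]
    ring
  · have h := freq_assemble d hm hF (2^(2*m-2)) (2^(m-1)) 1 (2^(m-2))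
      (cnt_a0 d hm hF).2.2 (fun a ha => (cnt_T1 d hm hF a ha).2.2)
      (fun a ha0 ha => (cnt_T0 d hm hF a ha0 ha).2.2)
    rw [h, hf3, hK1, hK2, hMK]
    zify [show (1:ℕ) ≤ 2*K by omega]
    ring
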